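/- Let Q be the output of the Frequent Directions algorithm run on an n×d matrix A with parameter ℓ, and let Δ = ∑_{i=1}^n δ_i. Then ℓΔ = ‖A‖_F² − ‖Q‖_F², and for every unit vector x ∈ ℝ^d, 0 ≤ ‖Ax‖² − ‖Qx‖² ≤ ‖A‖_F²/ℓ. -/

import Mathlib

open Matrix

/-- The squared Euclidean norm of a vector in `ℝ^m`. -/
noncomputable def sqNorm {m : ℕ} (v : Fin m → ℝ) : ℝ := ∑ i, v i ^ 2

/-- The squared Frobenius norm of a real matrix. -/
noncomputable def frobSq {m p : ℕ} (M : Matrix (Fin m) (Fin p) ℝ) : ℝ :=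
  ∑ i, ∑ j, M i j ^ 2


lemma sqNorm_eq_dot {m : ℕ} (v : Fin m → ℝ) : sqNorm v = v ⬝ᵥ v := by
  simp [sqNorm, dotProduct, sq]

lemma sqNorm_nonneg' {m : ℕ} (v : Fin m → ℝ) : 0 ≤ sqNorm v :=
  Finset.sum_nonneg fun _ _ => sq_nonneg _

lemma frobSq_nonneg' {m p : ℕ} (M : Matrix (Fin m) (Fin p) ℝ) : 0 ≤ frobSq M :=
  Finset.sum_nonneg fun _ _ => Finset.sum_nonneg fun _ _ => sq_nonneg _

lemma sqNorm_orth_mulVec {m : ℕ} {Z : Matrix (Fin m) (Fin m) ℝ} (hZ : Zᵀ * Z = 1)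
    (v : Fin m → ℝ) : sqNorm (Z.mulVec v) = sqNorm v := by
  rw [sqNorm_eq_dot, sqNorm_eq_dot, dotProduct_mulVec, ← mulVec_transpose,
    mulVec_mulVec, hZ, one_mulVec]

lemma frobSq_eq_trace {m p : ℕ} (M : Matrix (Fin m) (Fin p) ℝ) :
    frobSq M = (M * Mᵀ).trace := by
  simp [frobSq, Matrix.trace, Matrix.mul_apply, Matrix.diag, sq]

lemma frobSq_diag_mul {p m : ℕ} (t : Fin m → ℝ) {Y : Matrix (Fin p) (Fin m) ℝ}
    (hY : Yᵀ * Y = 1) : frobSq (Matrix.diagonal t * Yᵀ) = ∑ j, t j ^ 2 := by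
  rw [frobSq_eq_trace]
  have h : Matrix.diagonal t * Yᵀ * (Matrix.diagonal t * Yᵀ)ᵀ
      = Matrix.diagonal (fun j => t j ^ 2) := by
    rw [transpose_mul, transpose_transpose, diagonal_transpose]
    rw [Matrix.mul_assoc, ← Matrix.mul_assoc Yᵀ, hY, Matrix.one_mul,
      diagonal_mul_diagonal]
    simp [sq]
  rw [h, trace_diagonal]

lemma frobSq_orth_mul {m p : ℕ} {Z : Matrix (Fin m) (Fin m) ℝ} (hZ : Zᵀ * Z = 1)
    (M : Matrix (Fin m) (Fin p) ℝ) : frobSq (Z * M) = frobSq M := by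
  rw [frobSq, frobSq, Finset.sum_comm, Finset.sum_comm (γ := Fin m)]
  refine Finset.sum_congr rfl fun j _ => ?_
  have h := sqNorm_orth_mulVec hZ (fun k => M k j)
  simpa [sqNorm, mulVec, dotProduct, Matrix.mul_apply] using h

lemma sqNorm_proj_le {p m : ℕ} {Y : Matrix (Fin p) (Fin m) ℝ} (hY : Yᵀ * Y = 1)
    (x : Fin p → ℝ) : sqNorm (Yᵀ.mulVec x) ≤ sqNorm x := by
  set u := Yᵀ.mulVec x with hu
  have key : sqNorm (x - Y.mulVec u) = sqNorm x - sqNorm u := by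
    have h1 : x ⬝ᵥ Y.mulVec u = u ⬝ᵥ u := by
      rw [dotProduct_mulVec, ← mulVec_transpose, hu]
    have h2 : (Y.mulVec u) ⬝ᵥ (Y.mulVec u) = u ⬝ᵥ u := by
      rw [dotProduct_mulVec, ← mulVec_transpose, mulVec_mulVec, hY, one_mulVec]
    rw [sqNorm_eq_dot, sqNorm_eq_dot, sqNorm_eq_dot]
    rw [sub_dotProduct, dotProduct_sub, dotProduct_sub, h2]
    have h1' : (Y.mulVec u) ⬝ᵥ x = u ⬝ᵥ u := by rw [dotProduct_comm, h1]
    rw [h1', h1]; ring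
  have h0 := sqNorm_nonneg' (x - Y.mulVec u)
  rw [key] at h0; linarith

lemma frobSq_updateRow {m p : ℕ} (M : Matrix (Fin m) (Fin p) ℝ) (k : Fin m) (r : Fin p → ℝ) :
    frobSq (M.updateRow k r) = frobSq M - sqNorm (M k) + sqNorm r := by
  rw [frobSq, frobSq]
  rw [← Finset.add_sum_erase _ _ (Finset.mem_univ k),
    ← Finset.add_sum_erase (f := fun i => ∑ j, M i j ^ 2) _ (Finset.mem_univ k)]
  have h1 : ∀ i ∈ Finset.univ.erase k,
      ∑ j, (M.updateRow k r) i j ^ 2 = ∑ j, M i j ^ 2 := by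
    intro i hi
    simp [Matrix.updateRow_apply, Finset.mem_erase.mp hi |>.1]
  rw [Finset.sum_congr rfl h1]
  simp [sqNorm]; ring

lemma sqNorm_mulVec_updateRow {m p : ℕ} (M : Matrix (Fin m) (Fin p) ℝ) (k : Fin m)
    (r : Fin p → ℝ) (x : Fin p → ℝ) :
    sqNorm ((M.updateRow k r).mulVec x)
      = sqNorm (M.mulVec x) - (M k ⬝ᵥ x) ^ 2 + (r ⬝ᵥ x) ^ 2 := by
  rw [sqNorm, sqNorm]
  rw [← Finset.add_sum_erase _ _ (Finset.mem_univ k),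
    ← Finset.add_sum_erase (f := fun i => (M.mulVec x) i ^ 2) _ (Finset.mem_univ k)]
  have h1 : ∀ i ∈ Finset.univ.erase k,
      ((M.updateRow k r).mulVec x) i ^ 2 = (M.mulVec x) i ^ 2 := by
    intro i hi
    simp [Matrix.mulVec, Matrix.updateRow_apply, Finset.mem_erase.mp hi |>.1]
  rw [Finset.sum_congr rfl h1]
  simp [Matrix.mulVec]; ring

lemma fd_telescope {n : ℕ} (f : Fin (n+1) → ℝ) :
    ∑ i : Fin n, (f i.succ - f i.castSucc) = f (Fin.last n) - f 0 := by
  induction n with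
  | zero => simp
  | succ n ih =>
    rw [Fin.sum_univ_castSucc]
    have h := ih (f ∘ Fin.castSucc)
    simp only [Function.comp] at h
    simp only [← Fin.succ_castSucc] at h
    rw [h]
    simp [Fin.succ_last]

lemma diag_mul_row_zero {p m : ℕ} (t : Fin m → ℝ) (Y : Matrix (Fin p) (Fin m) ℝ)
    (k : Fin m) (hk : t k = 0) : (Matrix.diagonal t * Yᵀ) k = 0 := by
  funext j
  simp [Matrix.mul_apply, Matrix.diagonal_apply, hk]

/-- Let `Q = Qⁿ` be the output of the Frequent Directions algorithm run on an
`n × d` matrix `A` with parameter `ℓ`, and let `Δ = ∑_{i=1}^n δ_i`.  Then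
`ℓ Δ = ‖A‖_F² - ‖Q‖_F²`, and for every unit vector `x ∈ ℝ^d`,
`0 ≤ ‖Ax‖² - ‖Qx‖² ≤ ‖A‖_F² / ℓ`. -/
theorem fd_frobenius_invariant
    (n d ℓ : ℕ) (hℓ : 0 < ℓ)
    (A : Matrix (Fin n) (Fin d) ℝ)
    (Q : Fin (n + 1) → Matrix (Fin ℓ) (Fin d) ℝ)
    (C : Fin n → Matrix (Fin ℓ) (Fin d) ℝ)
    (Z : Fin n → Matrix (Fin ℓ) (Fin ℓ) ℝ)
    (Y : Fin n → Matrix (Fin d) (Fin ℓ) ℝ)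
    (s : Fin n → Fin ℓ → ℝ) (δ : Fin n → ℝ)
    -- the algorithm starts with the zero matrix
    (hQ0 : Q 0 = 0)
    -- `C i` is `Q^{i-1}` with its last row replaced by the `i`-th row of `A`
    (hC : ∀ i : Fin n,
      C i = (Q i.castSucc).updateRow ⟨ℓ - 1, Nat.sub_lt hℓ Nat.one_pos⟩ (A i))
    -- a singular value decomposition `C i = Z S Yᵀ` of `C i`
    (hZ : ∀ i, (Z i)ᵀ * Z i = 1)
    (hY : ∀ i, (Y i)ᵀ * Y i = 1)
    (hSVD : ∀ i, C i = Z i * Matrix.diagonal (s i) * (Y i)ᵀ)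
    (hmono : ∀ i, ∀ j j' : Fin ℓ, j ≤ j' → s i j' ≤ s i j)
    (hnn : ∀ i j, 0 ≤ s i j)
    -- `δ i` is the square of the smallest singular value of `C i`
    (hδ : ∀ i, δ i = s i ⟨ℓ - 1, Nat.sub_lt hℓ Nat.one_pos⟩ ^ 2)
    -- the shrinking step producing `Q^i = S' Yᵀ`
    (hQs : ∀ i : Fin n,
      Q i.succ = Matrix.diagonal (fun j => Real.sqrt (s i j ^ 2 - δ i)) * (Y i)ᵀ)
 :
    (ℓ : ℝ) * (∑ i, δ i) = frobSq A - frobSq (Q (Fin.last n)) ∧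
    ∀ x : Fin d → ℝ, sqNorm x = 1 →
      0 ≤ sqNorm (A.mulVec x) - sqNorm ((Q (Fin.last n)).mulVec x) ∧
      sqNorm (A.mulVec x) - sqNorm ((Q (Fin.last n)).mulVec x) ≤
        frobSq A / (ℓ : ℝ) := by
  set k₀ : Fin ℓ := ⟨ℓ - 1, Nat.sub_lt hℓ Nat.one_pos⟩ with hk₀
  -- δ i ≤ s i j ^ 2
  have hge : ∀ i j, δ i ≤ s i j ^ 2 := by
    intro i j
    rw [hδ i]
    have hjk : j ≤ k₀ := by
      rw [Fin.le_def]
      show (j : ℕ) ≤ ℓ - 1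
      have := j.isLt
      omega
    exact pow_le_pow_left₀ (hnn i k₀) (hmono i j k₀ hjk) 2
  have hδnn : ∀ i, 0 ≤ δ i := fun i => (hδ i) ▸ sq_nonneg _
  have hsqrt : ∀ i j, (Real.sqrt (s i j ^ 2 - δ i)) ^ 2 = s i j ^ 2 - δ i :=
    fun i j => Real.sq_sqrt (sub_nonneg.mpr (hge i j))
  -- the last row of every Q k is zero
  have hlast : ∀ k : Fin (n + 1), Q k k₀ = 0 := by
    intro k
    induction k using Fin.cases with
    | zero => rw [hQ0]; rfl
    | succ i =>
      rw [hQs i]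
      apply diag_mul_row_zero
      rw [hδ i]
      simp [hk₀]
  -- Frobenius norm computations
  have hfrobC : ∀ i, frobSq (C i) = ∑ j, s i j ^ 2 := by
    intro i
    rw [hSVD i, Matrix.mul_assoc, frobSq_orth_mul (hZ i), frobSq_diag_mul _ (hY i)]
  have hfrobC' : ∀ i, frobSq (C i) = frobSq (Q i.castSucc) + sqNorm (A i) := by
    intro i
    rw [hC i, frobSq_updateRow, hlast i.castSucc]
    simp [sqNorm]
  have hfrobQ : ∀ i, frobSq (Q i.succ) = (∑ j, s i j ^ 2) - ℓ * δ i := by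
    intro i
    rw [hQs i, frobSq_diag_mul _ (hY i)]
    rw [Finset.sum_congr rfl fun j _ => hsqrt i j]
    rw [Finset.sum_sub_distrib]
    simp [Finset.sum_const, nsmul_eq_mul]
  have step1 : ∀ i : Fin n,
      frobSq (Q i.succ) - frobSq (Q i.castSucc) = sqNorm (A i) - ℓ * δ i := by
    intro i
    have h1 := hfrobC i
    have h2 := hfrobC' i
    have h3 := hfrobQ i
    linarith
  have hfrobA : frobSq A = ∑ i, sqNorm (A i) := rfl
  have hpart1 : (ℓ : ℝ) * (∑ i, δ i) = frobSq A - frobSq (Q (Fin.last n)) := by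
    have ht := fd_telescope (fun k => frobSq (Q k))
    rw [Finset.sum_congr rfl fun i _ => step1 i] at ht
    rw [Finset.sum_sub_distrib, ← Finset.mul_sum] at ht
    rw [hQ0] at ht
    have hz : frobSq (0 : Matrix (Fin ℓ) (Fin d) ℝ) = 0 := by simp [frobSq]
    rw [hz] at ht
    rw [hfrobA]
    linarith
  refine ⟨hpart1, ?_⟩
  intro x hx
  set w : Fin n → Fin ℓ → ℝ := fun i => (Y i)ᵀ.mulVec x with hw
  have hCx : ∀ i, sqNorm ((C i).mulVec x) = ∑ j, s i j ^ 2 * (w i j) ^ 2 := by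
    intro i
    rw [hSVD i, Matrix.mul_assoc, ← mulVec_mulVec, sqNorm_orth_mulVec (hZ i),
      ← mulVec_mulVec]
    simp [sqNorm, mulVec_diagonal, mul_pow, hw]
  have hQx : ∀ i, sqNorm ((Q i.succ).mulVec x)
      = ∑ j, (s i j ^ 2 - δ i) * (w i j) ^ 2 := by
    intro i
    rw [hQs i, ← mulVec_mulVec]
    simp only [sqNorm, mulVec_diagonal, mul_pow, hsqrt, hw]
  have hCx' : ∀ i, sqNorm ((C i).mulVec x)
      = sqNorm ((Q i.castSucc).mulVec x) + (A i ⬝ᵥ x) ^ 2 := by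
    intro i
    rw [hC i, sqNorm_mulVec_updateRow, hlast i.castSucc]
    simp
  have step2 : ∀ i : Fin n,
      sqNorm ((Q i.succ).mulVec x) - sqNorm ((Q i.castSucc).mulVec x)
        = (A i ⬝ᵥ x) ^ 2 - δ i * sqNorm (w i) := by
    intro i
    have h1 := hCx i
    have h2 := hCx' i
    have h3 := hQx i
    have h4 : ∑ j, (s i j ^ 2 - δ i) * (w i j) ^ 2
        = (∑ j, s i j ^ 2 * (w i j) ^ 2) - δ i * sqNorm (w i) := by
      rw [sqNorm, Finset.mul_sum, ← Finset.sum_sub_distrib]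
      exact Finset.sum_congr rfl fun j _ => by ring
    rw [h3, h4, ← h1, h2]; ring
  have hAx : sqNorm (A.mulVec x) = ∑ i, (A i ⬝ᵥ x) ^ 2 := rfl
  have hkey : sqNorm (A.mulVec x) - sqNorm ((Q (Fin.last n)).mulVec x)
      = ∑ i, δ i * sqNorm (w i) := by
    have ht := fd_telescope (fun k => sqNorm ((Q k).mulVec x))
    rw [Finset.sum_congr rfl fun i _ => step2 i, Finset.sum_sub_distrib] at ht
    rw [hQ0] at ht
    have hz : sqNorm ((0 : Matrix (Fin ℓ) (Fin d) ℝ).mulVec x) = 0 := by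
      simp [sqNorm]
    rw [hz] at ht
    rw [hAx]
    linarith
  have hterm : ∀ i : Fin n, 0 ≤ δ i * sqNorm (w i) ∧ δ i * sqNorm (w i) ≤ δ i := by
    intro i
    constructor
    · exact mul_nonneg (hδnn i) (sqNorm_nonneg' _)
    · have := sqNorm_proj_le (hY i) x
      rw [hx] at this
      calc δ i * sqNorm (w i) ≤ δ i * 1 := by
            exact mul_le_mul_of_nonneg_left this (hδnn i)
        _ = δ i := mul_one _
  constructor
  · rw [hkey]
    exact Finset.sum_nonneg fun i _ => (hterm i).1
  · rw [hkey]
    have h1 : ∑ i, δ i * sqNorm (w i) ≤ ∑ i, δ i :=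
      Finset.sum_le_sum fun i _ => (hterm i).2
    have h2 : (ℓ : ℝ) * (∑ i, δ i) ≤ frobSq A := by
      rw [hpart1]
      have := frobSq_nonneg' (Q (Fin.last n))
      linarith
    have hℓpos : (0 : ℝ) < (ℓ : ℝ) := Nat.cast_pos.mpr hℓ
    have h3 : (∑ i, δ i) ≤ frobSq A / (ℓ : ℝ) := by
      rw [le_div_iff₀ hℓpos]
      linarith [h2]
    linarith
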